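/- Let a, b ∈ (0,∞) and t₁, t₂ ∈ ℝ with t₁ ≤ t₂. Then the improper double integral ∫_{−∞}^{t₁} ∫_{−∞}^{t₂} e^{−a(t₁−s₁+t₂−s₂) − b|s₁−s₂|} ds₂ ds₁ equals e^{−a(t₂−t₁)}/(a(a+b)) + (e^{−b(t₂−t₁)} − e^{−a(t₂−t₁)})/((a−b)(a+b)) if a ≠ b, and equals e^{−a(t₂−t₁)}/(a(a+b)) + (t₂−t₁)·e^{−a(t₂−t₁)}/(a+b) if a = b. -/

import Mathlib

open MeasureTheory

open Set Real Filter in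
private lemma me_subLeft (t : ℝ) : MeasurableEmbedding (fun y : ℝ => t - y) :=
  (Homeomorph.subLeft t).isClosedEmbedding.measurableEmbedding

open Set Real in
private lemma map_subLeft (t : ℝ) :
    Measure.map (fun y : ℝ => t - y) (volume : Measure ℝ) = volume :=
  (Measure.measurePreserving_sub_left volume t).map_eq

open Set Real in
private lemma preim_subLeft (t : ℝ) : (fun y : ℝ => t - y) ⁻¹' (Iic t) = Ici 0 := by
  ext y; simp [sub_le_iff_le_add]

open Set Real in
private lemma integral_Iic_sub (t : ℝ) (f : ℝ → ℝ) :
    ∫ x in Iic t, f x = ∫ y in Ioi (0:ℝ), f (t - y) := by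
  conv_lhs => rw [← map_subLeft t]
  rw [(me_subLeft t).setIntegral_map, preim_subLeft, integral_Ici_eq_integral_Ioi]

open Set Real in
private lemma integrableOn_Iic_sub {t : ℝ} {f : ℝ → ℝ}
    (h : IntegrableOn (fun y => f (t - y)) (Ioi (0:ℝ))) : IntegrableOn f (Iic t) := by
  have := (me_subLeft t).integrableOn_map_iff (f := f) (μ := (volume : Measure ℝ)) (s := Iic t)
  rw [map_subLeft t, preim_subLeft] at this
  rw [this]
  exact (integrableOn_Ici_iff_integrableOn_Ioi).2 h

open Set Real in
private lemma integral_exp_neg_mul_Ioi_zero {c : ℝ} (hc : 0 < c) :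
    ∫ y in Ioi (0:ℝ), exp (-(c * y)) = 1 / c := by
  have h := integral_comp_mul_left_Ioi (fun x => exp (-x)) 0 hc
  simp only [mul_zero] at h
  rw [h, integral_exp_neg_Ioi_zero, smul_eq_mul, mul_one, one_div]

open Set Real in
private lemma exp_affine_Iic (c d t : ℝ) (hc : 0 < c) :
    IntegrableOn (fun x => exp (c * x + d)) (Iic t) ∧
    (∫ x in Iic t, exp (c * x + d)) = exp (c * t + d) / c := by
  have key : ∀ y : ℝ, exp (c * (t - y) + d) = exp (c * t + d) * exp (-(c * y)) := by
    intro y; rw [← exp_add]; ring_nf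
  constructor
  · apply integrableOn_Iic_sub
    simp only [key]
    apply Integrable.const_mul
    have := exp_neg_integrableOn_Ioi (0:ℝ) hc
    have h2 : IntegrableOn (fun x => rexp (-(c * x))) (Ioi 0) := by simpa [neg_mul] using this
    exact h2
  · rw [integral_Iic_sub]
    simp only [key]
    rw [integral_const_mul, integral_exp_neg_mul_Ioi_zero hc, mul_one_div]

open Set Real in
private lemma linexp_affine_Iic (c d t : ℝ) (hc : 0 < c) :
    IntegrableOn (fun x => (t - x) * exp (c * x + d)) (Iic t) ∧
    (∫ x in Iic t, (t - x) * exp (c * x + d)) = exp (c * t + d) / c ^ 2 := by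
  have key : ∀ y : ℝ, (t - (t - y)) * exp (c * (t - y) + d)
      = exp (c * t + d) * (y * exp (-(c * y))) := by
    intro y
    rw [show c * (t - y) + d = (c * t + d) + (-(c * y)) by ring, exp_add]; ring
  have hint : IntegrableOn (fun y : ℝ => y * exp (-(c * y))) (Ioi (0:ℝ)) := by
    have := integrableOn_rpow_mul_exp_neg_mul_rpow (s := 1) (p := 1)
      (by norm_num) one_pos hc
    simpa [Real.rpow_one, neg_mul] using this
  constructor
  · apply integrableOn_Iic_sub
    simp only [key]
    exact hint.const_mul _
  · rw [integral_Iic_sub]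
    simp only [key]
    rw [integral_const_mul]
    have hg := integral_rpow_mul_exp_neg_mul_Ioi (a := 2) (r := c) two_pos hc
    rw [show (2:ℝ) - 1 = 1 by norm_num] at hg
    simp only [Real.rpow_one] at hg
    rw [hg, Real.Gamma_two, mul_one,
      show ((2:ℝ)) = ((2:ℕ):ℝ) by norm_num, Real.rpow_natCast]
    rw [div_pow, one_pow, mul_one_div]

open Set Real in
private lemma integral_exp_affine {c : ℝ} (d u v : ℝ) (hc : c ≠ 0) :
    ∫ x in u..v, exp (c * x + d) = (exp (c * v + d) - exp (c * u + d)) / c := by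
  simp only [Real.exp_add]
  rw [intervalIntegral.integral_mul_const,
    intervalIntegral.integral_comp_mul_left (fun x => exp x) hc]
  rw [integral_exp, smul_eq_mul]
  field_simp

open Set Real in
private lemma inner_split (a b t₁ t₂ s₁ : ℝ) (ha : 0 < a) (hb : 0 < b) (hs : s₁ ≤ t₂) :
    (∫ s₂ in Iic t₂, Real.exp (-a * (t₁ - s₁ + t₂ - s₂) - b * |s₁ - s₂|))
      = Real.exp (2*a*s₁ + (-(a*t₁) - a*t₂)) / (a+b)
        + ∫ s₂ in s₁..t₂, Real.exp ((a-b)*s₂ + ((a+b)*s₁ - a*t₁ - a*t₂)) := by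
  have h1 : EqOn (fun s₂ => Real.exp (-a * (t₁ - s₁ + t₂ - s₂) - b * |s₁ - s₂|))
      (fun s₂ => Real.exp ((a+b)*s₂ + ((a-b)*s₁ - a*t₁ - a*t₂))) (Iic s₁) := by
    intro x hx
    simp only
    rw [abs_of_nonneg (sub_nonneg.2 (mem_Iic.1 hx))]
    congr 1; ring
  have h2 : EqOn (fun s₂ => Real.exp (-a * (t₁ - s₁ + t₂ - s₂) - b * |s₁ - s₂|))
      (fun s₂ => Real.exp ((a-b)*s₂ + ((a+b)*s₁ - a*t₁ - a*t₂))) (Ioc s₁ t₂) := by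
    intro x hx
    simp only
    rw [show |s₁ - x| = -(s₁ - x) from abs_of_nonpos (sub_nonpos.2 hx.1.le)]
    congr 1; ring
  have i1 : IntegrableOn (fun s₂ => Real.exp (-a * (t₁ - s₁ + t₂ - s₂) - b * |s₁ - s₂|))
      (Iic s₁) :=
    ((exp_affine_Iic (a+b) ((a-b)*s₁ - a*t₁ - a*t₂) s₁ (by positivity)).1).congr_fun
      h1.symm measurableSet_Iic
  have i2 : IntegrableOn (fun s₂ => Real.exp (-a * (t₁ - s₁ + t₂ - s₂) - b * |s₁ - s₂|))
      (Ioc s₁ t₂) := by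
    apply Continuous.integrableOn_Ioc
    fun_prop
  rw [← Iic_union_Ioc_eq_Iic hs,
    setIntegral_union (Iic_disjoint_Ioc le_rfl) measurableSet_Ioc i1 i2]
  congr 1
  · rw [setIntegral_congr_fun measurableSet_Iic h1,
      (exp_affine_Iic (a+b) ((a-b)*s₁ - a*t₁ - a*t₂) s₁ (by positivity)).2]
    congr 2
    ring
  · rw [setIntegral_congr_fun measurableSet_Ioc h2, ← intervalIntegral.integral_of_le hs]

/-- Time integrals for convolutional Wick powers: for `a, b > 0` and `t₁ ≤ t₂`,
`∫_{−∞}^{t₁} ∫_{−∞}^{t₂} e^{−a(t₁−s₁+t₂−s₂) − b|s₁−s₂|} ds₂ ds₁` equals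
`e^{−a(t₂−t₁)}/(a(a+b)) + (e^{−b(t₂−t₁)} − e^{−a(t₂−t₁)})/((a−b)(a+b))` if `a ≠ b`,
and equals `e^{−a(t₂−t₁)}/(a(a+b)) + (t₂−t₁)e^{−a(t₂−t₁)}/(a+b)` if `a = b`. -/
theorem time_integral_conv (a b : ℝ) (ha : 0 < a) (hb : 0 < b)
    (t₁ t₂ : ℝ) (h12 : t₁ ≤ t₂) :
    (a ≠ b →
      (∫ s₁ in Set.Iic t₁, ∫ s₂ in Set.Iic t₂,
          Real.exp (-a * (t₁ - s₁ + t₂ - s₂) - b * |s₁ - s₂|))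
        = Real.exp (-a * (t₂ - t₁)) / (a * (a + b))
          + (Real.exp (-b * (t₂ - t₁)) - Real.exp (-a * (t₂ - t₁)))
            / ((a - b) * (a + b)))
    ∧ (a = b →
      (∫ s₁ in Set.Iic t₁, ∫ s₂ in Set.Iic t₂,
          Real.exp (-a * (t₁ - s₁ + t₂ - s₂) - b * |s₁ - s₂|))
        = Real.exp (-a * (t₂ - t₁)) / (a * (a + b))
          + (t₂ - t₁) * Real.exp (-a * (t₂ - t₁)) / (a + b)) := by
  have ha2 : (0:ℝ) < 2 * a := by positivity
  have hab : (0:ℝ) < a + b := by positivity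
  constructor
  · -- case a ≠ b
    intro hne
    have hne' : a - b ≠ 0 := sub_ne_zero.2 hne
    have houter : Set.EqOn
        (fun s₁ => ∫ s₂ in Set.Iic t₂,
          Real.exp (-a * (t₁ - s₁ + t₂ - s₂) - b * |s₁ - s₂|))
        (fun s₁ => (1/(a+b) - 1/(a-b)) * Real.exp (2*a*s₁ + (-(a*t₁) - a*t₂))
          + (1/(a-b)) * Real.exp ((a+b)*s₁ + (-(a*t₁) - b*t₂))) (Set.Iic t₁) := by
      intro s₁ hs₁
      simp only
      rw [inner_split a b t₁ t₂ s₁ ha hb ((Set.mem_Iic.1 hs₁).trans h12),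
        integral_exp_affine _ _ _ hne']
      rw [show (a-b)*t₂ + ((a+b)*s₁ - a*t₁ - a*t₂) = (a+b)*s₁ + (-(a*t₁) - b*t₂) by ring,
        show (a-b)*s₁ + ((a+b)*s₁ - a*t₁ - a*t₂) = 2*a*s₁ + (-(a*t₁) - a*t₂) by ring]
      field_simp
      ring
    rw [setIntegral_congr_fun measurableSet_Iic houter]
    rw [integral_add
        (((exp_affine_Iic (2*a) (-(a*t₁) - a*t₂) t₁ ha2).1).const_mul _)
        (((exp_affine_Iic (a+b) (-(a*t₁) - b*t₂) t₁ hab).1).const_mul _),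
      integral_const_mul, integral_const_mul,
      (exp_affine_Iic (2*a) (-(a*t₁) - a*t₂) t₁ ha2).2,
      (exp_affine_Iic (a+b) (-(a*t₁) - b*t₂) t₁ hab).2]
    rw [show 2*a*t₁ + (-(a*t₁) - a*t₂) = -a*(t₂-t₁) by ring,
      show (a+b)*t₁ + (-(a*t₁) - b*t₂) = -b*(t₂-t₁) by ring]
    field_simp
    ring
  · -- case a = b
    rintro rfl
    have houter : Set.EqOn
        (fun s₁ => ∫ s₂ in Set.Iic t₂,
          Real.exp (-a * (t₁ - s₁ + t₂ - s₂) - a * |s₁ - s₂|))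
        (fun s₁ => (1/(a+a)) * Real.exp (2*a*s₁ + (-(a*t₁) - a*t₂))
          + (t₂ - t₁) * Real.exp (2*a*s₁ + (-(a*t₁) - a*t₂))
          + (t₁ - s₁) * Real.exp (2*a*s₁ + (-(a*t₁) - a*t₂))) (Set.Iic t₁) := by
      intro s₁ hs₁
      simp only
      rw [inner_split a a t₁ t₂ s₁ ha ha ((Set.mem_Iic.1 hs₁).trans h12)]
      simp only [show ∀ s₂ : ℝ, (a-a)*s₂ + ((a+a)*s₁ - a*t₁ - a*t₂)
          = 2*a*s₁ + (-(a*t₁) - a*t₂) from fun s₂ => by ring]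
      rw [intervalIntegral.integral_const, smul_eq_mul]
      ring
    rw [setIntegral_congr_fun measurableSet_Iic houter]
    have haa : (0:ℝ) < a + a := by positivity
    have i12 : IntegrableOn (fun x =>
        1/(a+a) * Real.exp (2*a*x + (-(a*t₁) - a*t₂))
          + (t₂ - t₁) * Real.exp (2*a*x + (-(a*t₁) - a*t₂))) (Set.Iic t₁) := by
      exact (((exp_affine_Iic (2*a) (-(a*t₁) - a*t₂) t₁ ha2).1).const_mul _).add
        (((exp_affine_Iic (2*a) (-(a*t₁) - a*t₂) t₁ ha2).1).const_mul _)
    rw [integral_add i12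
        ((linexp_affine_Iic (2*a) (-(a*t₁) - a*t₂) t₁ ha2).1),
      integral_add
        (((exp_affine_Iic (2*a) (-(a*t₁) - a*t₂) t₁ ha2).1).const_mul _)
        (((exp_affine_Iic (2*a) (-(a*t₁) - a*t₂) t₁ ha2).1).const_mul _),
      integral_const_mul, integral_const_mul,
      (exp_affine_Iic (2*a) (-(a*t₁) - a*t₂) t₁ ha2).2,
      (linexp_affine_Iic (2*a) (-(a*t₁) - a*t₂) t₁ ha2).2]
    rw [show 2*a*t₁ + (-(a*t₁) - a*t₂) = -a*(t₂-t₁) by ring]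
    field_simp
    ring
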